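/- Let x be K-sparse with support T, let Λᵏ with |Λᵏ| = Nk and |T ∩ Λᵏ| = l < K, and let rᵏ = P_{Λᵏ}^⊥ Φx. Let β₁ = max_{j ∈ T\Λᵏ} |⟨φ_j, rᵏ⟩|. Then β₁ ≥ (1 - δ_{K-l} - (1+δ_{Nk})/(1-δ_{Nk})² · δ_{Nk+K-l}²) · ‖x_{T\Λᵏ}‖₂ / √(K-l), provided the RIP constants appearing are less than 1. -/

import Mathlib

open Matrix

/-- A vector is K-sparse if it has at most K nonzero entries. -/
def IsSparse {n : ℕ} (K : ℕ) (x : Fin n → ℝ) : Prop :=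
  (Finset.univ.filter fun i => x i ≠ 0).card ≤ K

/-- The Euclidean (ℓ₂) norm of a finitely-indexed real vector. -/
noncomputable def l2norm {ι : Type*} [Fintype ι] (v : ι → ℝ) : ℝ :=
  Real.sqrt (∑ i, v i ^ 2)

/-- Φ satisfies the RIP of order K with constant δ. -/
def SatisfiesRIP {m n : ℕ} (Φ : Matrix (Fin m) (Fin n) ℝ) (K : ℕ) (δ : ℝ) : Prop :=
  ∀ x : Fin n → ℝ, IsSparse K x →
    (1 - δ) * l2norm x ^ 2 ≤ l2norm (Φ.mulVec x) ^ 2 ∧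
    l2norm (Φ.mulVec x) ^ 2 ≤ (1 + δ) * l2norm x ^ 2

/-- The column-submatrix of Φ consisting of columns indexed by I. -/
def colSub {m n : ℕ} (Φ : Matrix (Fin m) (Fin n) ℝ) (I : Finset (Fin n)) :
    Matrix (Fin m) I ℝ :=
  fun i j => Φ i (j : Fin n)

namespace Beta1Aux

lemma sq_l2norm {ι : Type*} [Fintype ι] (v : ι → ℝ) : l2norm v ^ 2 = ∑ i, v i ^ 2 :=
  Real.sq_sqrt (Finset.sum_nonneg fun _ _ => sq_nonneg _)

lemma isSparse_of_support {n K : ℕ} {S : Finset (Fin n)} {v : Fin n → ℝ}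
    (h : ∀ i, v i ≠ 0 → i ∈ S) (hK : S.card ≤ K) : IsSparse K v := by
  refine le_trans (Finset.card_le_card ?_) hK
  intro i hi
  simp only [Finset.mem_filter] at hi
  exact h i hi.2

noncomputable def ext {n : ℕ} (S : Finset (Fin n)) (u : S → ℝ) : Fin n → ℝ :=
  fun i => if h : i ∈ S then u ⟨i, h⟩ else 0

lemma ext_eq_zero {n : ℕ} {S : Finset (Fin n)} (u : S → ℝ) {i : Fin n} (h : i ∉ S) :
    ext S u i = 0 := by simp [ext, h]

lemma mulVec_ext {m n : ℕ} (Φ : Matrix (Fin m) (Fin n) ℝ) (S : Finset (Fin n)) (u : S → ℝ) :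
    Φ.mulVec (ext S u) = (colSub Φ S).mulVec u := by
  funext i
  show ∑ j, Φ i j * ext S u j = ∑ j : S, colSub Φ S i j * u j
  rw [← Finset.sum_subset (Finset.subset_univ S)
    (fun j _ hj => by simp [ext_eq_zero u hj])]
  rw [← Finset.sum_attach S (fun j => Φ i j * ext S u j), Finset.univ_eq_attach]
  exact Finset.sum_congr rfl fun j _ => by simp [ext, j.2, colSub]

lemma qsum_ext {n : ℕ} (S : Finset (Fin n)) (u : S → ℝ) :
    ∑ i, ext S u i ^ 2 = ∑ j, u j ^ 2 := by
  rw [← Finset.sum_subset (Finset.subset_univ S)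
    (fun j _ hj => by simp [ext_eq_zero u hj])]
  rw [← Finset.sum_attach S (fun j => ext S u j ^ 2), Finset.univ_eq_attach]
  exact Finset.sum_congr rfl fun j _ => by simp [ext, j.2]

lemma qsum_add {ι : Type*} [Fintype ι] (v w : ι → ℝ) :
    ∑ i, (v i + w i) ^ 2 = ∑ i, v i ^ 2 + 2 * (v ⬝ᵥ w) + ∑ i, w i ^ 2 := by
  rw [dotProduct, Finset.mul_sum, ← Finset.sum_add_distrib, ← Finset.sum_add_distrib]
  exact Finset.sum_congr rfl fun i _ => by ring

lemma qsum_sub {ι : Type*} [Fintype ι] (v w : ι → ℝ) :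
    ∑ i, (v i - w i) ^ 2 = ∑ i, v i ^ 2 - 2 * (v ⬝ᵥ w) + ∑ i, w i ^ 2 := by
  rw [dotProduct, Finset.mul_sum, ← Finset.sum_sub_distrib, ← Finset.sum_add_distrib]
  exact Finset.sum_congr rfl fun i _ => by ring

lemma dot_self {ι : Type*} [Fintype ι] (v : ι → ℝ) : v ⬝ᵥ v = ∑ i, v i ^ 2 := by
  simp [dotProduct, pow_two]

lemma mulVec_dot {m n : ℕ} (M : Matrix (Fin m) (Fin n) ℝ) (a : Fin n → ℝ) (z : Fin m → ℝ) :
    (M.mulVec a) ⬝ᵥ z = a ⬝ᵥ (Mᵀ.mulVec z) := by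
  rw [dotProduct_comm, Matrix.dotProduct_mulVec, Matrix.mulVec_transpose,
    dotProduct_comm]

lemma mulVec_dot' {m n : ℕ} {S : Finset (Fin n)} (M : Matrix (Fin m) S ℝ)
    (a : S → ℝ) (z : Fin m → ℝ) :
    (M.mulVec a) ⬝ᵥ z = a ⬝ᵥ (Mᵀ.mulVec z) := by
  rw [dotProduct_comm, Matrix.dotProduct_mulVec, Matrix.mulVec_transpose,
    dotProduct_comm]

end Beta1Aux

open Beta1Aux in
set_option maxHeartbeats 2000000 in
theorem beta1_lower_bound {m n : ℕ} (Φ : Matrix (Fin m) (Fin n) ℝ)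
    (x : Fin n → ℝ) (K N k l : ℕ) (hN : 0 < N) (hlK : l < K)
    (T Λ : Finset (Fin n)) (hT : T = Finset.univ.filter fun i => x i ≠ 0)
    (hTK : T.card = K) (hΛ : Λ.card = N * k) (hl : (T ∩ Λ).card = l)
    (hrank : IsUnit ((colSub Φ Λ)ᵀ * colSub Φ Λ))
    (r : Fin m → ℝ)
    (hr : r = Φ.mulVec x -
      (colSub Φ Λ * ((colSub Φ Λ)ᵀ * colSub Φ Λ)⁻¹ * (colSub Φ Λ)ᵀ).mulVec (Φ.mulVec x))
    (hne : (T \ Λ).Nonempty)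
    (δ₁ δ₃ δ₄ : ℝ)
    (hδ₁ : 0 ≤ δ₁) (hδ₁' : δ₁ < 1) (hRIP₁ : SatisfiesRIP Φ (K - l) δ₁)
    (hδ₃ : 0 ≤ δ₃) (hδ₃' : δ₃ < 1) (hRIP₃ : SatisfiesRIP Φ (N * k + K - l) δ₃)
    (hδ₄ : 0 ≤ δ₄) (hδ₄' : δ₄ < 1) (hRIP₄ : SatisfiesRIP Φ (N * k) δ₄) :
    (T \ Λ).sup' hne (fun j => |Φᵀ.mulVec r j|) ≥
      (1 - δ₁ - (1 + δ₄) / (1 - δ₄) ^ 2 * δ₃ ^ 2) *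
        Real.sqrt (∑ i ∈ T \ Λ, x i ^ 2) / Real.sqrt ((K : ℝ) - l) := by
  classical
  -- abbreviations
  set A : Matrix (Fin m) Λ ℝ := colSub Φ Λ with hA
  set G : Matrix Λ Λ ℝ := Aᵀ * A with hG
  set β : ℝ := (T \ Λ).sup' hne (fun j => |Φᵀ.mulVec r j|) with hβ
  obtain ⟨j₀, hj₀⟩ := hne
  have hβ0 : 0 ≤ β := by
    rw [hβ]
    exact le_trans (abs_nonneg _) (Finset.le_sup' (fun j => |Φᵀ.mulVec r j|) hj₀)
  clear_value β
  set x₁ : Fin n → ℝ := fun i => if i ∈ T \ Λ then x i else 0 with hx₁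
  set Qb : ℝ := ∑ i ∈ T \ Λ, x i ^ 2 with hQb
  have hQb0 : 0 ≤ Qb := Finset.sum_nonneg fun _ _ => sq_nonneg _
  clear_value Qb
  have hx₁0 : ∀ i, i ∉ T \ Λ → x₁ i = 0 := by
    intro i hi
    simp only [hx₁]
    rw [if_neg hi]
  have hx₁1 : ∀ i, i ∈ T \ Λ → x₁ i = x i := by
    intro i hi
    simp only [hx₁]
    rw [if_pos hi]
  have hQbx : ∑ i, x₁ i ^ 2 = Qb := by
    rw [hQb, ← Finset.sum_subset (Finset.subset_univ (T \ Λ))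
      (fun i _ hi => by rw [hx₁0 i hi]; ring)]
    exact Finset.sum_congr rfl fun i hi => by rw [hx₁1 i hi]
  -- translated RIP
  have rip_lo : ∀ (K' : ℕ) (δ : ℝ), SatisfiesRIP Φ K' δ → ∀ v : Fin n → ℝ, IsSparse K' v →
      (1 - δ) * ∑ i, v i ^ 2 ≤ ∑ i, (Φ.mulVec v) i ^ 2 := by
    intro K' δ h v hv
    have := (h v hv).1
    rwa [sq_l2norm, sq_l2norm] at this
  have rip_hi : ∀ (K' : ℕ) (δ : ℝ), SatisfiesRIP Φ K' δ → ∀ v : Fin n → ℝ, IsSparse K' v →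
      ∑ i, (Φ.mulVec v) i ^ 2 ≤ (1 + δ) * ∑ i, v i ^ 2 := by
    intro K' δ h v hv
    have := (h v hv).2
    rwa [sq_l2norm, sq_l2norm] at this
  -- cardinalities
  have hcardTΛ : (T \ Λ).card = K - l := by
    have := Finset.card_sdiff_add_card_inter T Λ
    omega
  have hsupx₁ : ∀ i, x₁ i ≠ 0 → i ∈ T \ Λ := by
    intro i hi
    by_contra h
    exact hi (hx₁0 i h)
  have hx₁sparse : IsSparse (K - l) x₁ :=
    isSparse_of_support hsupx₁ (le_of_eq hcardTΛ)
  have hxT : ∀ i, i ∉ T → x i = 0 := by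
    intro i hi
    by_contra hc
    exact hi (hT ▸ Finset.mem_filter.mpr ⟨Finset.mem_univ i, hc⟩)
  have hunion : (Λ ∪ (T \ Λ)).card ≤ N * k + K - l := by
    rw [Finset.card_union_of_disjoint (Finset.disjoint_sdiff)]
    omega
  -- inverse Gram facts
  have hdet : IsUnit G.det := (Matrix.isUnit_iff_isUnit_det G).mp hrank
  have hGGi : G * G⁻¹ = 1 := Matrix.mul_nonsing_inv G hdet
  -- cross-correlation bound
  have hcross : ∀ u : Λ → ℝ,
      (A.mulVec u) ⬝ᵥ (Φ.mulVec x₁) ≤ δ₃ * ((∑ j, u j ^ 2) + Qb) / 2 := by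
    intro u
    set a : Fin n → ℝ := ext Λ u with ha
    have hdisj : a ⬝ᵥ x₁ = 0 := by
      apply Finset.sum_eq_zero
      intro i _
      by_cases h : i ∈ Λ
      · have h2 : i ∉ T \ Λ := fun hc => (Finset.mem_sdiff.mp hc).2 h
        rw [hx₁0 i h2, mul_zero]
      · simp [ha, ext_eq_zero u h]
    have hsupa : ∀ i, a i ≠ 0 → i ∈ Λ := by
      intro i hi
      by_contra h
      exact hi (ext_eq_zero u h)
    have hsp1 : IsSparse (N * k + K - l) (fun i => a i + x₁ i) := by
      apply isSparse_of_support (S := Λ ∪ (T \ Λ)) _ hunion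
      intro i hi
      by_contra h
      simp only [Finset.mem_union, not_or] at h
      have h1 : a i = 0 := by by_contra hc; exact h.1 (hsupa i hc)
      have h2 : x₁ i = 0 := by by_contra hc; exact h.2 (hsupx₁ i hc)
      rw [h1, h2] at hi; simp at hi
    have hsp2 : IsSparse (N * k + K - l) (fun i => a i - x₁ i) := by
      apply isSparse_of_support (S := Λ ∪ (T \ Λ)) _ hunion
      intro i hi
      by_contra h
      simp only [Finset.mem_union, not_or] at h
      have h1 : a i = 0 := by by_contra hc; exact h.1 (hsupa i hc)
      have h2 : x₁ i = 0 := by by_contra hc; exact h.2 (hsupx₁ i hc)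
      rw [h1, h2] at hi; simp at hi
    have h1 := rip_hi _ _ hRIP₃ (a + x₁) hsp1
    have h2 := rip_lo _ _ hRIP₃ (a - x₁) hsp2
    have q1 : ∑ i, (a + x₁) i ^ 2 = (∑ i, a i ^ 2) + Qb := by
      have := qsum_add a x₁
      simp only [Pi.add_apply] at this ⊢
      rw [this, hdisj, hQbx]; ring
    have q2 : ∑ i, (a - x₁) i ^ 2 = (∑ i, a i ^ 2) + Qb := by
      have := qsum_sub a x₁
      simp only [Pi.sub_apply] at this ⊢
      rw [this, hdisj, hQbx]; ring
    have qa : ∑ i, a i ^ 2 = ∑ j, u j ^ 2 := qsum_ext Λ u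
    have qΦ1 : ∑ i, (Φ.mulVec (a + x₁)) i ^ 2 =
        ∑ i, (Φ.mulVec a) i ^ 2 + 2 * ((Φ.mulVec a) ⬝ᵥ (Φ.mulVec x₁))
          + ∑ i, (Φ.mulVec x₁) i ^ 2 := by
      rw [Matrix.mulVec_add]
      have := qsum_add (Φ.mulVec a) (Φ.mulVec x₁)
      simpa using this
    have qΦ2 : ∑ i, (Φ.mulVec (a - x₁)) i ^ 2 =
        ∑ i, (Φ.mulVec a) i ^ 2 - 2 * ((Φ.mulVec a) ⬝ᵥ (Φ.mulVec x₁))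
          + ∑ i, (Φ.mulVec x₁) i ^ 2 := by
      rw [Matrix.mulVec_sub]
      have := qsum_sub (Φ.mulVec a) (Φ.mulVec x₁)
      simpa using this
    have hAa : A.mulVec u = Φ.mulVec a := (mulVec_ext Φ Λ u).symm
    rw [hAa]
    rw [q1, qa] at h1
    rw [q2, qa] at h2
    rw [qΦ1] at h1
    rw [qΦ2] at h2
    linarith
  -- the vector v = Aᵀ Φ x₁ and its bound
  set v : Λ → ℝ := Aᵀ.mulVec (Φ.mulVec x₁) with hv
  set Qv : ℝ := ∑ j, v j ^ 2 with hQv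
  have hQv0 : 0 ≤ Qv := Finset.sum_nonneg fun _ _ => sq_nonneg _
  clear_value v Qv
  have hkey : ∀ t : ℝ, t * Qv ≤ δ₃ * (t ^ 2 * Qv + Qb) / 2 := by
    intro t
    have := hcross (fun j => t * v j)
    have hAv : A.mulVec (fun j => t * v j) = fun i => t * (A.mulVec v) i := by
      funext i
      simp [Matrix.mulVec, dotProduct, Finset.mul_sum]
      exact Finset.sum_congr rfl fun j _ => by ring
    rw [hAv] at this
    have hdot : (fun i => t * (A.mulVec v) i) ⬝ᵥ (Φ.mulVec x₁)
        = t * ((A.mulVec v) ⬝ᵥ (Φ.mulVec x₁)) := by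
      simp [dotProduct, Finset.mul_sum, mul_assoc]
    have hvv : (A.mulVec v) ⬝ᵥ (Φ.mulVec x₁) = Qv := by
      rw [mulVec_dot', ← hv, dot_self, hQv]
    have hsq : ∑ j, (t * v j) ^ 2 = t ^ 2 * Qv := by
      rw [hQv, Finset.mul_sum]
      exact Finset.sum_congr rfl fun j _ => by ring
    rw [hdot, hvv, hsq] at this
    exact this
  have hQvQb : Qv ≤ δ₃ ^ 2 * Qb := by
    rcases eq_or_lt_of_le hQv0 with h0 | hQvpos
    · rw [← h0]; positivity
    rcases eq_or_lt_of_le hQb0 with hb0 | hQbpos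
    · -- Qb = 0 forces x₁ = 0 hence v = 0, contradiction
      exfalso
      have hx₁z : x₁ = 0 := by
        funext i
        have := (Finset.sum_eq_zero_iff_of_nonneg
          (fun i _ => sq_nonneg (x₁ i))).mp (by rw [hQbx, ← hb0]) i (Finset.mem_univ i)
        exact pow_eq_zero_iff (by norm_num) |>.mp this
      have hvz : v = 0 := by rw [hv, hx₁z, Matrix.mulVec_zero, Matrix.mulVec_zero]
      rw [hQv, hvz] at hQvpos
      simp at hQvpos
    · have hsv : (0:ℝ) < Real.sqrt Qv := Real.sqrt_pos.mpr hQvpos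
      have hsb : (0:ℝ) < Real.sqrt Qb := Real.sqrt_pos.mpr hQbpos
      have hkey2 := hkey (Real.sqrt Qb / Real.sqrt Qv)
      have e1 : Real.sqrt Qb / Real.sqrt Qv * Qv = Real.sqrt Qb * Real.sqrt Qv := by
        rw [div_mul_eq_mul_div, div_eq_iff hsv.ne', mul_assoc, Real.mul_self_sqrt hQv0]
      have e2 : (Real.sqrt Qb / Real.sqrt Qv) ^ 2 * Qv = Qb := by
        rw [div_pow, Real.sq_sqrt hQb0, Real.sq_sqrt hQv0,
          div_mul_cancel₀ _ (ne_of_gt hQvpos)]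
      rw [e1, e2] at hkey2
      have h6 : Real.sqrt Qv ≤ δ₃ * Real.sqrt Qb := by
        nlinarith [Real.sq_sqrt hQb0]
      calc Qv = Real.sqrt Qv ^ 2 := (Real.sq_sqrt hQv0).symm
        _ ≤ (δ₃ * Real.sqrt Qb) ^ 2 := by
            apply pow_le_pow_left₀ hsv.le h6
        _ = δ₃ ^ 2 * Qb := by rw [mul_pow, Real.sq_sqrt hQb0]
  -- u = G⁻¹ v and bounds
  have hGiG : G⁻¹ * G = 1 := Matrix.nonsing_inv_mul G hdet
  set u : Λ → ℝ := G⁻¹.mulVec v with hu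
  clear_value u
  set Qu : ℝ := ∑ j, u j ^ 2 with hQu
  have hQu0 : 0 ≤ Qu := Finset.sum_nonneg fun _ _ => sq_nonneg _
  clear_value Qu
  have hGu : G.mulVec u = v := by
    rw [hu, Matrix.mulVec_mulVec, hGGi, Matrix.one_mulVec]
  have hextu_sparse : IsSparse (N * k) (ext Λ u) :=
    isSparse_of_support (fun i hi => by by_contra h; exact hi (ext_eq_zero u h))
      (le_of_eq hΛ)
  have hAu_lo := rip_lo _ _ hRIP₄ (ext Λ u) hextu_sparse
  have hAu_hi := rip_hi _ _ hRIP₄ (ext Λ u) hextu_sparse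
  rw [mulVec_ext, qsum_ext, ← hA, ← hQu] at hAu_lo
  rw [mulVec_ext, qsum_ext, ← hA, ← hQu] at hAu_hi
  set QAu : ℝ := ∑ i, (A.mulVec u) i ^ 2 with hQAu_def
  clear_value QAu
  have hAtAu : Aᵀ.mulVec (A.mulVec u) = v := by
    rw [Matrix.mulVec_mulVec, ← hG, hGu]
  have hAuv : QAu = u ⬝ᵥ v := by
    rw [hQAu_def, ← dot_self, mulVec_dot' A u (A.mulVec u), hAtAu]
  have hCS : (u ⬝ᵥ v) ^ 2 ≤ Qu * Qv := by
    have := Finset.sum_mul_sq_le_sq_mul_sq Finset.univ u v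
    simpa [dotProduct, hQu, hQv] using this
  have hQuv : (1 - δ₄) ^ 2 * Qu ≤ Qv := by
    rcases eq_or_lt_of_le hQu0 with h0 | hQupos
    · rw [← h0, mul_zero]; exact hQv0
    · have h1 : (1 - δ₄) * Qu ≤ u ⬝ᵥ v := by rw [← hAuv]; exact hAu_lo
      have hd0 : 0 < (1 - δ₄) * Qu := mul_pos (by linarith) hQupos
      have h3 : ((1 - δ₄) * Qu) ^ 2 ≤ Qu * Qv :=
        le_trans (pow_le_pow_left₀ hd0.le h1 2) hCS
      nlinarith [h3, hQupos]
  have hδ₄sq : (0:ℝ) < (1 - δ₄) ^ 2 := pow_pos (by linarith) 2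
  have hQAu : QAu ≤ (1 + δ₄) / (1 - δ₄) ^ 2 * δ₃ ^ 2 * Qb := by
    have hp : (0:ℝ) ≤ 1 + δ₄ := by linarith
    have m1 : QAu * (1 - δ₄) ^ 2 ≤ ((1 + δ₄) * Qu) * (1 - δ₄) ^ 2 :=
      mul_le_mul_of_nonneg_right hAu_hi hδ₄sq.le
    have m2 : (1 + δ₄) * ((1 - δ₄) ^ 2 * Qu) ≤ (1 + δ₄) * Qv :=
      mul_le_mul_of_nonneg_left hQuv hp
    have m3 : (1 + δ₄) * Qv ≤ (1 + δ₄) * (δ₃ ^ 2 * Qb) :=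
      mul_le_mul_of_nonneg_left hQvQb hp
    rw [show (1 + δ₄) / (1 - δ₄) ^ 2 * δ₃ ^ 2 * Qb
        = ((1 + δ₄) * (δ₃ ^ 2 * Qb)) / (1 - δ₄) ^ 2 by ring, le_div_iff₀ hδ₄sq]
    nlinarith [m1, m2, m3]
  -- projection identities
  set w₂ : Λ → ℝ := fun j => x j with hw₂
  have hx₂ : x = x₁ + ext Λ w₂ := by
    funext i
    by_cases h1 : i ∈ T \ Λ
    · have h2 : i ∉ Λ := (Finset.mem_sdiff.mp h1).2
      simp only [Pi.add_apply]
      rw [hx₁1 i h1, ext_eq_zero _ h2, add_zero]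
    · by_cases h2 : i ∈ Λ
      · simp only [Pi.add_apply]
        rw [hx₁0 i h1, zero_add]
        simp only [Beta1Aux.ext, dif_pos h2, hw₂]
      · have h3 : i ∉ T := fun hc => h1 (Finset.mem_sdiff.mpr ⟨hc, h2⟩)
        simp only [Pi.add_apply]
        rw [hx₁0 i h1, ext_eq_zero _ h2, hxT i h3, add_zero]
  have hPA : (A * G⁻¹ * Aᵀ) * A = A := by
    rw [Matrix.mul_assoc (A * G⁻¹) Aᵀ A, ← hG, Matrix.mul_assoc A G⁻¹ G, hGiG,
      Matrix.mul_one]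
  have hrx : r = Φ.mulVec x₁ - A.mulVec u := by
    rw [hr, hx₂, Matrix.mulVec_add, mulVec_ext, ← hA, Matrix.mulVec_add]
    have hP1 : (A * G⁻¹ * Aᵀ).mulVec (A.mulVec w₂) = A.mulVec w₂ := by
      rw [Matrix.mulVec_mulVec, hPA]
    have hP2 : (A * G⁻¹ * Aᵀ).mulVec (Φ.mulVec x₁) = A.mulVec u := by
      rw [← Matrix.mulVec_mulVec, ← Matrix.mulVec_mulVec, ← hv, ← hu]
    rw [hP1, hP2]
    abel
  have hArz : Aᵀ.mulVec r = 0 := by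
    rw [hrx, Matrix.mulVec_sub, hAtAu, ← hv, sub_self]
  have hdotAur : (A.mulVec u) ⬝ᵥ r = 0 := by
    rw [mulVec_dot', hArz, dotProduct_zero]
  have hx₁r : Φ.mulVec x₁ = r + A.mulVec u := by rw [hrx]; abel
  have hQr_eq : ∑ i, r i ^ 2 = (Φ.mulVec x₁) ⬝ᵥ r := by
    rw [hx₁r, add_dotProduct, dot_self, hdotAur, add_zero]
  have hQΦx₁ : ∑ i, (Φ.mulVec x₁) i ^ 2 = ∑ i, r i ^ 2 + QAu := by
    rw [hx₁r]
    have hq := qsum_add r (A.mulVec u)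
    have hcomm : r ⬝ᵥ (A.mulVec u) = 0 := by
      rw [dotProduct_comm]; exact hdotAur
    simp only [Pi.add_apply]
    rw [hq, hcomm, mul_zero, add_zero, hQAu_def]
  have hlow := rip_lo _ _ hRIP₁ x₁ hx₁sparse
  rw [hQbx] at hlow
  have hQr_low : (1 - δ₁) * Qb - (1 + δ₄) / (1 - δ₄) ^ 2 * δ₃ ^ 2 * Qb ≤ ∑ i, r i ^ 2 := by
    linarith [hQAu, hQΦx₁, hlow]
  -- upper chain via β
  have hchainA : ∑ i, r i ^ 2 ≤ β * (Real.sqrt ((K:ℝ) - l) * Real.sqrt Qb) := by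
    rw [hQr_eq, mulVec_dot]
    have h1 : x₁ ⬝ᵥ (Φᵀ.mulVec r) = ∑ i ∈ T \ Λ, x i * (Φᵀ.mulVec r) i := by
      rw [dotProduct, ← Finset.sum_subset (Finset.subset_univ (T \ Λ))
        (fun i _ hi => by rw [hx₁0 i hi, zero_mul])]
      exact Finset.sum_congr rfl fun i hi => by rw [hx₁1 i hi]
    rw [h1]
    have h2 : ∑ i ∈ T \ Λ, x i * (Φᵀ.mulVec r) i ≤ ∑ i ∈ T \ Λ, |x i| * β := by
      apply Finset.sum_le_sum
      intro i hi
      calc x i * (Φᵀ.mulVec r) i ≤ |x i * (Φᵀ.mulVec r) i| := le_abs_self _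
        _ = |x i| * |(Φᵀ.mulVec r) i| := abs_mul _ _
        _ ≤ |x i| * β := by
            apply mul_le_mul_of_nonneg_left _ (abs_nonneg _)
            rw [hβ]
            exact Finset.le_sup' (fun j => |Φᵀ.mulVec r j|) hi
    have h3 : ∑ i ∈ T \ Λ, |x i| ≤ Real.sqrt ((K:ℝ) - l) * Real.sqrt Qb := by
      have hcs := Finset.sum_mul_sq_le_sq_mul_sq (T \ Λ) (fun _ => (1:ℝ)) (fun i => |x i|)
      have hsum : ∑ i ∈ T \ Λ, |x i| ^ 2 = Qb := by
        rw [hQb]; exact Finset.sum_congr rfl fun i _ => sq_abs (x i)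
      have hcard : ((T \ Λ).card : ℝ) = (K : ℝ) - l := by
        rw [hcardTΛ, Nat.cast_sub hlK.le]
      simp only [one_mul, one_pow] at hcs
      rw [Finset.sum_const, nsmul_eq_mul, mul_one, hsum, hcard] at hcs
      have habs : (0:ℝ) ≤ ∑ i ∈ T \ Λ, |x i| :=
        Finset.sum_nonneg fun _ _ => abs_nonneg _
      rw [← Real.sqrt_mul (by
        have hc : (l:ℝ) < (K:ℝ) := by exact_mod_cast hlK
        linarith) Qb]
      rw [show ∑ i ∈ T \ Λ, |x i| = Real.sqrt ((∑ i ∈ T \ Λ, |x i|) ^ 2) by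
        rw [Real.sqrt_sq habs]]
      exact Real.sqrt_le_sqrt hcs
    calc ∑ i ∈ T \ Λ, x i * (Φᵀ.mulVec r) i ≤ ∑ i ∈ T \ Λ, |x i| * β := h2
      _ = β * ∑ i ∈ T \ Λ, |x i| := by rw [← Finset.sum_mul, mul_comm]
      _ ≤ β * (Real.sqrt ((K:ℝ) - l) * Real.sqrt Qb) :=
          mul_le_mul_of_nonneg_left h3 hβ0
  -- final assembly
  set C : ℝ := 1 - δ₁ - (1 + δ₄) / (1 - δ₄) ^ 2 * δ₃ ^ 2 with hC
  clear_value C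
  have hKl : (0:ℝ) < (K:ℝ) - l := by
    have hcast : (l:ℝ) < (K:ℝ) := by exact_mod_cast hlK
    linarith
  have hs : 0 < Real.sqrt ((K:ℝ) - l) := Real.sqrt_pos.mpr hKl
  rcases le_or_gt C 0 with hC0 | hC0
  · refine le_trans ?_ hβ0
    apply div_nonpos_of_nonpos_of_nonneg _ (Real.sqrt_nonneg _)
    exact mul_nonpos_of_nonpos_of_nonneg hC0 (Real.sqrt_nonneg _)
  · rcases eq_or_lt_of_le hQb0 with hb0 | hb0
    · rw [← hb0, Real.sqrt_zero, mul_zero, zero_div]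
      exact hβ0
    · have hsq : 0 < Real.sqrt Qb := Real.sqrt_pos.mpr hb0
      have hmain : C * Qb ≤ β * (Real.sqrt ((K:ℝ) - l) * Real.sqrt Qb) := by
        have : C * Qb = (1 - δ₁) * Qb - (1 + δ₄) / (1 - δ₄) ^ 2 * δ₃ ^ 2 * Qb := by
          rw [hC]; ring
        rw [this]
        exact le_trans hQr_low hchainA
      rw [ge_iff_le, div_le_iff₀ hs]
      have h7 : (C * Real.sqrt Qb) * Real.sqrt Qb ≤
          (β * Real.sqrt ((K:ℝ) - l)) * Real.sqrt Qb := by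
        calc (C * Real.sqrt Qb) * Real.sqrt Qb = C * Qb := by
              rw [mul_assoc, Real.mul_self_sqrt hQb0]
          _ ≤ β * (Real.sqrt ((K:ℝ) - l) * Real.sqrt Qb) := hmain
          _ = (β * Real.sqrt ((K:ℝ) - l)) * Real.sqrt Qb := by ring
      exact le_of_mul_le_mul_right h7 hsq
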